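/- Let f : ℝ → ℝ be four times continuously differentiable on a neighborhood of a point t, with f'(t) > 0. Then, as ε → 0⁺, log( e^{f(t+ε) − f(t−ε)} − 1 ) − log(2ε) − log(f'(t)) − ε·f'(t) − (ε²/6)·( f'''(t)/f'(t) + f'(t)² ) = O(ε³). -/

import Mathlib

open Asymptotics Filter Topology Finset

lemma my_taylor_isBigO : ∀ (n : ℕ) (g : ℝ → ℝ), ContDiffAt ℝ (n+1) g 0 →
    (fun x : ℝ => g x - ∑ k ∈ Finset.range (n+1), iteratedDeriv k g 0 / (k.factorial : ℝ) * x ^ k)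
      =O[𝓝 0] fun x => x ^ (n+1) := by
  intro n
  induction n with
  | zero =>
    intro g hg
    have h := (hg.differentiableAt (by simp)).isBigO_sub
    simpa using h
  | succ n IH =>
    intro g hg
    -- local smoothness on an open set
    obtain ⟨s, hs_mem, hs⟩ := hg.contDiffOn le_rfl (by simp)
    obtain ⟨U, hUs, hU_open, hU0⟩ := mem_nhds_iff.1 hs_mem
    have hsU : ContDiffOn ℝ (↑(n+1+1)) g U := hs.mono hUs
    have hderiv : ContDiffOn ℝ (↑(n+1)) (deriv g) U := by
      apply hsU.deriv_of_isOpen hU_open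
      norm_cast
    have hg' : ContDiffAt ℝ (↑(n+1)) (deriv g) 0 := hderiv.contDiffAt (hU_open.mem_nhds hU0)
    have hIH := IH (deriv g) hg'
    rw [isBigO_iff] at hIH
    obtain ⟨C, hC⟩ := hIH
    -- choose a ball inside U where the bound holds
    rw [Metric.eventually_nhds_iff] at hC
    obtain ⟨r₁, hr₁, hball⟩ := hC
    obtain ⟨r₂, hr₂, hUb⟩ := Metric.mem_nhds_iff.1 (hU_open.mem_nhds hU0)
    set r := min r₁ r₂ with hr_def
    have hr : 0 < r := lt_min hr₁ hr₂
    set C' := max C 0 with hC'_def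
    have hC'0 : 0 ≤ C' := le_max_right _ _
    set R : ℝ → ℝ := fun x =>
      deriv g x - ∑ k ∈ Finset.range (n+1), iteratedDeriv k (deriv g) 0 / (k.factorial : ℝ) * x ^ k
      with hR_def
    set E : ℝ → ℝ := fun x =>
      g x - ∑ k ∈ Finset.range (n+1+1), iteratedDeriv k g 0 / (k.factorial : ℝ) * x ^ k
      with hE_def
    have hRb : ∀ y ∈ Metric.ball (0:ℝ) r, ‖R y‖ ≤ C' * |y| ^ (n+1) := by
      intro y hy
      rw [Metric.mem_ball, Real.dist_eq, sub_zero] at hy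
      have h1 := hball (y := y) (by rw [Real.dist_eq, sub_zero]; exact lt_of_lt_of_le hy (min_le_left _ _))
      calc ‖R y‖ ≤ C * ‖y ^ (n+1)‖ := h1
        _ ≤ C' * |y| ^ (n+1) := by
            rw [Real.norm_eq_abs, abs_pow]
            exact mul_le_mul_of_nonneg_right (le_max_left _ _) (by positivity)
    have hEd : ∀ x ∈ Metric.ball (0:ℝ) r, HasDerivAt E (R x) x := by
      intro x hx
      rw [Metric.mem_ball, Real.dist_eq, sub_zero] at hx
      have hxU : x ∈ U := hUb (by rw [Metric.mem_ball, Real.dist_eq, sub_zero]; exact lt_of_lt_of_le hx (min_le_right _ _))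
      have hgd : HasDerivAt g (deriv g x) x := by
        have : DifferentiableAt ℝ g x := by
          apply (hsU.contDiffAt (hU_open.mem_nhds hxU)).differentiableAt
          norm_cast
        exact this.hasDerivAt
      have hpoly : HasDerivAt
          (fun x : ℝ => ∑ k ∈ Finset.range (n+1+1), iteratedDeriv k g 0 / (k.factorial : ℝ) * x ^ k)
          (∑ k ∈ Finset.range (n+1+1), iteratedDeriv k g 0 / (k.factorial : ℝ) * ((k : ℝ) * x ^ (k-1))) x := by
        apply HasDerivAt.fun_sum
        intro k _
        exact (hasDerivAt_pow k x).const_mul _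
      have hsum : (∑ k ∈ Finset.range (n+1+1), iteratedDeriv k g 0 / (k.factorial : ℝ) * ((k : ℝ) * x ^ (k-1)))
          = ∑ k ∈ Finset.range (n+1), iteratedDeriv k (deriv g) 0 / (k.factorial : ℝ) * x ^ k := by
        rw [Finset.sum_range_succ']
        simp only [Nat.cast_zero, zero_mul, mul_zero, add_zero]
        apply Finset.sum_congr rfl
        intro k _
        rw [← iteratedDeriv_succ', Nat.factorial_succ]
        have hk : ((k:ℝ)+1) ≠ 0 := by positivity
        have hkf : ((k.factorial : ℝ)) ≠ 0 := by positivity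
        push_cast
        field_simp
      have := hgd.sub hpoly
      rw [hsum] at this
      exact this
    rw [isBigO_iff]
    refine ⟨C', ?_⟩
    filter_upwards [Metric.ball_mem_nhds (0:ℝ) hr] with x hx
    have hsub : Set.uIcc (0:ℝ) x ⊆ Metric.ball (0:ℝ) r := by
      intro y hy
      rw [Metric.mem_ball, Real.dist_eq, sub_zero]
      rw [Set.mem_uIcc] at hy
      rw [Metric.mem_ball, Real.dist_eq, sub_zero] at hx
      rcases hy with ⟨h1, h2⟩ | ⟨h1, h2⟩ <;> rw [abs_lt] at hx ⊢ <;> constructor <;> linarith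
    have habs : ∀ y ∈ Set.uIcc (0:ℝ) x, |y| ≤ |x| := by
      intro y hy
      rw [Set.mem_uIcc] at hy
      rcases hy with ⟨h1, h2⟩ | ⟨h1, h2⟩ <;> rw [abs_le] <;> rw [le_abs, neg_le, le_abs] at * <;>
        first
        | (constructor <;> [left; left] <;> linarith)
        | (constructor <;> [right; right] <;> linarith)
    have hmvt := (convex_uIcc (0:ℝ) x).norm_image_sub_le_of_norm_hasDerivWithin_le
      (f := E) (f' := R) (C := C' * |x| ^ (n+1))
      (fun y hy => (hEd y (hsub hy)).hasDerivWithinAt)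
      (fun y hy => le_trans (hRb y (hsub hy))
        (mul_le_mul_of_nonneg_left (pow_le_pow_left₀ (abs_nonneg _) (habs y hy) _) hC'0))
      Set.left_mem_uIcc Set.right_mem_uIcc
    have hE0 : E 0 = 0 := by
      rw [hE_def]
      simp [Finset.sum_range_succ']
    rw [hE0, sub_zero, sub_zero] at hmvt
    calc ‖E x‖ ≤ C' * |x| ^ (n+1) * ‖x‖ := hmvt
      _ = C' * ‖x ^ (n+1+1)‖ := by
          rw [Real.norm_eq_abs, Real.norm_eq_abs, abs_pow]
          ring


lemma my_iteratedDeriv_comp_const_add (n : ℕ) (f : ℝ → ℝ) (a : ℝ) :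
    iteratedDeriv n (fun x => f (a + x)) = fun x => iteratedDeriv n f (a + x) := by
  induction n with
  | zero => simp
  | succ n ih =>
    funext x
    rw [iteratedDeriv_succ, ih, deriv_comp_const_add, ← iteratedDeriv_succ]

lemma stmt16_hu4 (f : ℝ → ℝ) (t : ℝ) (hf : ContDiffAt ℝ 4 f t) :
    (fun ε : ℝ => (f (t + ε) - f (t - ε)) -
        (2 * deriv f t * ε + iteratedDeriv 3 f t / 3 * ε ^ 3)) =O[𝓝 0] fun ε => ε ^ 4 := by
  have haff1 : ContDiffAt ℝ 4 (fun ε : ℝ => t + ε) 0 := (contDiff_const.add contDiff_id).contDiffAt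
  have haff2 : ContDiffAt ℝ 4 (fun ε : ℝ => t - ε) 0 := (contDiff_const.sub contDiff_id).contDiffAt
  have h1 : ContDiffAt ℝ 4 (fun ε : ℝ => f (t + ε)) 0 :=
    ContDiffAt.comp 0 (by simpa using hf) haff1
  have h2 : ContDiffAt ℝ 4 (fun ε : ℝ => f (t - ε)) 0 :=
    ContDiffAt.comp 0 (by simpa using hf) haff2
  have hd1 : ∀ k, iteratedDeriv k (fun ε : ℝ => f (t + ε)) 0 = iteratedDeriv k f t := by
    intro k
    rw [my_iteratedDeriv_comp_const_add]
    simp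
  have hd2 : ∀ k, iteratedDeriv k (fun ε : ℝ => f (t - ε)) 0 = (-1)^k * iteratedDeriv k f t := by
    intro k
    have h := iteratedDeriv_comp_neg k (fun x : ℝ => f (t + x)) 0
    rw [my_iteratedDeriv_comp_const_add] at h
    simp only [sub_eq_add_neg]
    simpa using h
  have T1 := my_taylor_isBigO 3 (fun ε : ℝ => f (t + ε)) (by exact_mod_cast h1)
  have T2 := my_taylor_isBigO 3 (fun ε : ℝ => f (t - ε)) (by exact_mod_cast h2)
  have h := T1.sub T2
  refine h.congr_left fun x => ?_
  simp only [hd1, hd2, Finset.sum_range_succ, Finset.sum_range_zero, iteratedDeriv_zero,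
    iteratedDeriv_one, Nat.factorial]
  push_cast
  ring


lemma my_pow_isBigO {m n : ℕ} (h : m ≤ n) :
    (fun ε : ℝ => ε ^ n) =O[𝓝 (0:ℝ)] fun ε => ε ^ m := by
  apply IsBigO.of_bound 1
  have h1 : ∀ᶠ ε : ℝ in 𝓝 0, |ε| ≤ 1 := by
    filter_upwards [Metric.closedBall_mem_nhds (0:ℝ) one_pos] with ε hε
    rwa [Metric.mem_closedBall, Real.dist_eq, sub_zero] at hε
  filter_upwards [h1] with ε hε
  rw [Real.norm_eq_abs, Real.norm_eq_abs, abs_pow, abs_pow, one_mul]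
  exact pow_le_pow_of_le_one (abs_nonneg _) hε h

lemma my_mul_pow4_isBigO (w : ℝ → ℝ) (hw : Continuous w) :
    (fun ε : ℝ => ε ^ 4 * w ε) =O[𝓝 (0:ℝ)] fun ε : ℝ => ε ^ 4 :=
  ((isBigO_refl (fun ε : ℝ => ε ^ 4) (𝓝 0)).mul ((hw.tendsto 0).isBigO_one ℝ)).congr_right
    fun x => mul_one _

lemma my_exp_isBigO :
    (fun x : ℝ => Real.exp x - (1 + x + x^2/2 + x^3/6)) =O[𝓝 (0:ℝ)] fun x => x ^ 4 := by
  apply IsBigO.of_bound (5/96)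
  have h1 : ∀ᶠ x : ℝ in 𝓝 0, |x| ≤ 1 := by
    filter_upwards [Metric.closedBall_mem_nhds (0:ℝ) one_pos] with x hx
    rwa [Metric.mem_closedBall, Real.dist_eq, sub_zero] at hx
  filter_upwards [h1] with x hx
  have h := Real.exp_bound hx (n := 4) (by norm_num)
  have hs : (∑ m ∈ Finset.range 4, x ^ m / (m.factorial : ℝ)) = 1 + x + x^2/2 + x^3/6 := by
    norm_num [Finset.sum_range_succ, Nat.factorial]
  rw [hs] at h
  rw [Real.norm_eq_abs, Real.norm_eq_abs, abs_pow]
  calc |Real.exp x - (1 + x + x^2/2 + x^3/6)| ≤ |x|^4 * ((4:ℕ).succ / ((4:ℕ).factorial * 4)) := h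
    _ = 5/96 * |x|^4 := by norm_num [Nat.factorial]; ring
    _ ≤ 5/96 * |x|^4 := le_refl _

lemma my_log_isBigO :
    (fun y : ℝ => Real.log (1+y) - (y - y^2/2)) =O[𝓝 (0:ℝ)] fun y => y ^ 3 := by
  apply IsBigO.of_bound 2
  have h1 : ∀ᶠ y : ℝ in 𝓝 0, |y| ≤ 1/2 := by
    filter_upwards [Metric.closedBall_mem_nhds (0:ℝ) (by norm_num : (0:ℝ) < 1/2)] with y hy
    rwa [Metric.mem_closedBall, Real.dist_eq, sub_zero] at hy
  filter_upwards [h1] with y hy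
  have h := Real.abs_log_sub_add_sum_range_le (x := -y) (by rw [abs_neg]; linarith [abs_nonneg y]) 2
  have hs : (∑ i ∈ Finset.range 2, (-y) ^ (i+1) / ((i:ℝ)+1)) = -y + y^2/2 := by
    simp [Finset.sum_range_succ]
    ring
  rw [hs] at h
  have heq : |(-y + y^2/2) + Real.log (1 - -y)| = |Real.log (1+y) - (y - y^2/2)| := by
    rw [show (1:ℝ) - -y = 1 + y by ring]
    rw [show (-y + y^2/2) + Real.log (1+y) = Real.log (1+y) - (y - y^2/2) by ring]
  rw [heq] at h
  have hyabs : |-y| = |y| := abs_neg y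
  rw [hyabs] at h
  have hb : |y|^(2+1) / (1 - |y|) ≤ 2 * |y|^3 := by
    have h2 : (1:ℝ)/2 ≤ 1 - |y| := by linarith
    have h3 : (0:ℝ) < 1 - |y| := by linarith
    rw [div_le_iff₀ h3, show (2+1) = 3 from rfl]
    have h4 : (0:ℝ) ≤ |y|^3 := by positivity
    nlinarith [h4, hy, abs_nonneg y]
  rw [Real.norm_eq_abs, Real.norm_eq_abs, abs_pow]
  calc |Real.log (1+y) - (y - y^2/2)| ≤ |y|^(2+1) / (1 - |y|) := h
    _ ≤ 2 * |y|^3 := hb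

set_option maxHeartbeats 1000000 in
/-- Continuum-limit expansion of a single term of the crown action: as `ε → 0⁺`,
`log(e^{f(t+ε)-f(t-ε)} - 1)
  = log(2ε) + log f'(t) + ε f'(t) + (ε²/6)(f'''(t)/f'(t) + f'(t)²) + O(ε³)`. -/
theorem stmt_16 (f : ℝ → ℝ) (t : ℝ) (hf : ContDiffAt ℝ 4 f t)
    (hf' : 0 < deriv f t) :
    (fun ε : ℝ =>
        Real.log (Real.exp (f (t + ε) - f (t - ε)) - 1) -
          Real.log (2 * ε) - Real.log (deriv f t) - ε * deriv f t -
          ε ^ 2 / 6 * (iteratedDeriv 3 f t / deriv f t + (deriv f t) ^ 2))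
      =O[nhdsWithin 0 (Set.Ioi 0)] fun ε : ℝ => ε ^ 3 := by
  have ha : (0:ℝ) < deriv f t := hf'
  set a := deriv f t with ha_def
  set b := iteratedDeriv 3 f t with hb_def
  have ha0 : a ≠ 0 := ne_of_gt ha
  set l : Filter ℝ := nhdsWithin 0 (Set.Ioi 0) with hl_def
  set u : ℝ → ℝ := fun ε => f (t + ε) - f (t - ε) with hu_def
  set p : ℝ → ℝ := fun ε => 2 * a * ε + b / 3 * ε ^ 3 with hp_def
  set Q : ℝ → ℝ := fun ε => 2*a*ε + 2*a^2*ε^2 + (b/3 + 4*a^3/3)*ε^3 with hQ_def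
  set c : ℝ := b/(6*a) + 2*a^2/3 with hc_def
  set A : ℝ → ℝ := fun ε => (Real.exp (u ε) - 1) / (2*a*ε) with hA_def
  have hu4 : (fun ε : ℝ => u ε - p ε) =O[𝓝 0] fun ε => ε ^ 4 := stmt16_hu4 f t hf
  -- basic O facts
  have h41 : (fun ε : ℝ => ε ^ 4) =O[𝓝 (0:ℝ)] fun ε => ε := by
    have := my_pow_isBigO (m := 1) (n := 4) (by norm_num)
    exact this.congr_right fun x => pow_one x
  have h31 : (fun ε : ℝ => ε ^ 3) =O[𝓝 (0:ℝ)] fun ε => ε := by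
    have := my_pow_isBigO (m := 1) (n := 3) (by norm_num)
    exact this.congr_right fun x => pow_one x
  have h32 : (fun ε : ℝ => ε ^ 3) =O[𝓝 (0:ℝ)] fun ε => ε ^ 2 := my_pow_isBigO (by norm_num)
  have hid : (fun ε : ℝ => ε) =O[𝓝 (0:ℝ)] fun ε => ε := isBigO_refl _ _
  have hp1 : p =O[𝓝 (0:ℝ)] fun ε => ε := by
    have h1 : (fun ε : ℝ => 2 * a * ε) =O[𝓝 (0:ℝ)] fun ε => ε := hid.const_mul_left (2*a)
    have h2 : (fun ε : ℝ => b / 3 * ε ^ 3) =O[𝓝 (0:ℝ)] fun ε => ε := h31.const_mul_left (b/3)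
    exact (h1.add h2).congr_left fun x => rfl
  have hu1 : u =O[𝓝 (0:ℝ)] fun ε => ε := by
    have := (hu4.trans h41).add hp1
    exact this.congr_left fun x => by simp
  have hu0 : Filter.Tendsto u (𝓝 0) (𝓝 0) := hu1.trans_tendsto tendsto_id
  -- expansion of exp(u) - 1
  have hexpu : (fun ε : ℝ => Real.exp (u ε) - (1 + u ε + (u ε)^2/2 + (u ε)^3/6))
      =O[𝓝 (0:ℝ)] fun ε => ε ^ 4 := by
    have h := my_exp_isBigO.comp_tendsto hu0
    exact (h.congr_left fun x => rfl).trans (hu1.pow 4)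
  have hA3 : (fun ε : ℝ => (u ε)^2 - (p ε)^2) =O[𝓝 (0:ℝ)] fun ε => ε ^ 4 := by
    have h := hu4.mul (hu1.add hp1)
    have h2 : (fun ε : ℝ => ε^4 * ε) =O[𝓝 (0:ℝ)] fun ε => ε ^ 4 :=
      my_mul_pow4_isBigO (fun ε => ε) continuous_id
    exact (h.trans h2).congr_left fun x => by ring
  have hA4 : (fun ε : ℝ => (u ε)^3 - (p ε)^3) =O[𝓝 (0:ℝ)] fun ε => ε ^ 4 := by
    have hq : (fun ε : ℝ => (u ε)^2 + u ε * p ε + (p ε)^2) =O[𝓝 (0:ℝ)] fun ε => ε ^ 2 := by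
      have h1 := (hu1.mul hu1).congr_right fun x => (sq x).symm
      have h2 := (hu1.mul hp1).congr_right fun x => (sq x).symm
      have h3 := (hp1.mul hp1).congr_right fun x => (sq x).symm
      have h4 := (h1.add h2).add h3
      exact h4.congr_left fun x => by ring
    have h := hu4.mul hq
    have h2 : (fun ε : ℝ => ε^4 * ε^2) =O[𝓝 (0:ℝ)] fun ε => ε ^ 4 :=
      my_mul_pow4_isBigO (fun ε => ε^2) (by continuity)
    exact (h.trans h2).congr_left fun x => by ring
  have hA5 : (fun ε : ℝ => p ε + (p ε)^2/2 + (p ε)^3/6 - Q ε) =O[𝓝 (0:ℝ)] fun ε => ε ^ 4 := by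
    have h := my_mul_pow4_isBigO
      (fun ε => 2*a*b/3 + 2*a^2*b/3*ε + b^2/18*ε^2 + a*b^2/9*ε^3 + b^3/162*ε^5) (by continuity)
    refine h.congr_left fun x => ?_
    simp only [hp_def, hQ_def]
    ring
  have hQb : (fun ε : ℝ => Real.exp (u ε) - 1 - Q ε) =O[𝓝 (0:ℝ)] fun ε => ε ^ 4 := by
    have h := (((hexpu.add hu4).add (hA3.const_mul_left (1/2))).add
      (hA4.const_mul_left (1/6))).add hA5
    refine h.congr_left fun x => ?_
    ring
  have hQl : (fun ε : ℝ => Real.exp (u ε) - 1 - Q ε) =O[l] fun ε => ε ^ 4 :=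
    hQb.mono nhdsWithin_le_nhds
  -- expansion of A
  have hA : (fun ε : ℝ => A ε - (1 + a*ε + c*ε^2)) =O[l] fun ε => ε ^ 3 := by
    have h1 := hQl.mul (isBigO_refl (fun ε : ℝ => 1/(2*a*ε)) l)
    have heq1 : (fun ε : ℝ => (Real.exp (u ε) - 1 - Q ε) * (1/(2*a*ε)))
        =ᶠ[l] fun ε => A ε - (1 + a*ε + c*ε^2) := by
      filter_upwards [self_mem_nhdsWithin] with ε hε
      have hε0 : ε ≠ 0 := ne_of_gt hε
      simp only [hA_def, hQ_def, hc_def]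
      field_simp
      ring
    have heq2 : (fun ε : ℝ => ε^4 * (1/(2*a*ε))) =ᶠ[l] fun ε => 1/(2*a) * ε^3 := by
      filter_upwards [self_mem_nhdsWithin] with ε hε
      have hε0 : ε ≠ 0 := ne_of_gt hε
      field_simp
    exact ((h1.congr' heq1 heq2)).trans (isBigO_const_mul_self _ _ _)
  have h31l : (fun ε : ℝ => ε ^ 3) =O[l] fun ε => ε := h31.mono nhdsWithin_le_nhds
  have h32l : (fun ε : ℝ => ε ^ 3) =O[l] fun ε => ε ^ 2 := h32.mono nhdsWithin_le_nhds
  have hidl : (fun ε : ℝ => ε) =O[l] fun ε => ε := isBigO_refl _ _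
  have hA1 : (fun ε : ℝ => A ε - 1) =O[l] fun ε => ε := by
    have h1 : (fun ε : ℝ => a*ε + c*ε^2) =O[l] fun ε => ε := by
      have := (hidl.const_mul_left a).add
        ((((my_pow_isBigO (m := 1) (n := 2) (by norm_num)).congr_right
          fun x => pow_one x).mono nhdsWithin_le_nhds).const_mul_left c)
      exact this
    exact ((hA.trans h31l).add h1).congr_left fun x => by ring
  have hAm1t : Filter.Tendsto (fun ε => A ε - 1) l (𝓝 0) :=
    hA1.trans_tendsto (tendsto_id.mono_left nhdsWithin_le_nhds)
  have hAt : Filter.Tendsto A l (𝓝 1) := by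
    have h := hAm1t.add_const 1
    simp only [zero_add] at h
    exact h.congr fun x => by ring
  have hApos : ∀ᶠ ε in l, 1/2 < A ε := hAt.eventually (eventually_gt_nhds (by norm_num))
  -- log expansion
  have hlogA : (fun ε : ℝ => Real.log (A ε) - ((A ε - 1) - (A ε - 1)^2/2)) =O[l]
      fun ε => ε ^ 3 := by
    have h := my_log_isBigO.comp_tendsto hAm1t
    have h2 : (fun ε : ℝ => (A ε - 1)^3) =O[l] fun ε => ε^3 := hA1.pow 3
    refine (h.congr_left fun ε => ?_).trans h2
    show Real.log (1 + (A ε - 1)) - ((A ε - 1) - (A ε - 1)^2/2)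
        = Real.log (A ε) - ((A ε - 1) - (A ε - 1)^2/2)
    rw [show (1:ℝ) + (A ε - 1) = A ε by ring]
  have h1' : (fun ε : ℝ => (A ε - 1) - a*ε - c*ε^2) =O[l] fun ε => ε ^ 3 :=
    hA.congr_left fun x => by ring
  have h2' : (fun ε : ℝ => (A ε - 1)^2 - a^2*ε^2) =O[l] fun ε => ε ^ 3 := by
    have hq : (fun ε : ℝ => (A ε - 1) - a*ε) =O[l] fun ε => ε^2 := by
      have h1 := (hA.trans h32l).add
        (((isBigO_refl (fun ε : ℝ => ε^2) l)).const_mul_left c)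
      exact h1.congr_left fun x => by ring
    have hsum2 : (fun ε : ℝ => (A ε - 1) + a*ε) =O[l] fun ε => ε :=
      hA1.add (hidl.const_mul_left a)
    have h := hq.mul hsum2
    have h2 : (fun ε : ℝ => ε^2 * ε) =O[l] fun ε => ε^3 :=
      (isBigO_refl _ _).congr_left fun x => by ring
    exact (h.trans h2).congr_left fun x => by ring
  -- combine
  have hc0 : c = a^2/2 + (b/a + a^2)/6 := by
    rw [hc_def]
    field_simp
    ring
  have H : (fun ε : ℝ => Real.log (A ε) - a*ε - ε^2/6*(b/a + a^2)) =O[l] fun ε => ε ^ 3 := by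
    have h := (hlogA.add h1').add (h2'.const_mul_left (-(1/2)))
    refine h.congr_left fun ε => ?_
    rw [hc0]
    ring
  -- final eventual equality
  have heq : (fun ε : ℝ =>
        Real.log (Real.exp (f (t + ε) - f (t - ε)) - 1) -
          Real.log (2 * ε) - Real.log a - ε * a -
          ε ^ 2 / 6 * (b / a + a ^ 2))
      =ᶠ[l] fun ε => Real.log (A ε) - a*ε - ε^2/6*(b/a + a^2) := by
    filter_upwards [hApos, self_mem_nhdsWithin] with ε hA2 hε
    have hε0 : (0:ℝ) < ε := hε
    have h2aε : (2*a*ε) ≠ 0 := by positivity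
    have hApos' : (0:ℝ) < A ε := by linarith
    have hE : Real.exp (u ε) - 1 = A ε * (2*a*ε) := by
      rw [hA_def]
      field_simp
    have hueq : f (t + ε) - f (t - ε) = u ε := rfl
    rw [hueq, hE, Real.log_mul (ne_of_gt hApos') h2aε,
      show (2*a*ε) = (2*ε)*a by ring,
      Real.log_mul (by positivity) ha0]
    ring
  exact heq.trans_isBigO H
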